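/- Let U*(x) be the unique minimizer of (1/2)UᵀHU + xᵀFU subject to GU − Ex ≤ w, where H is symmetric positive definite. Suppose the active set A = {i : G_i U*(x) − E_i x = w_i} has full-row-rank G_A. Then U*(x) = −H⁻¹Fᵀx + H⁻¹G_Aᵀ(G_A H⁻¹ G_Aᵀ)⁻¹(w_A + S_A x), where S = E + G H⁻¹ Fᵀ; i.e., the minimizer is an affine function of x with these coefficient matrices. -/

import Mathlib

open Matrix

lemma quad_expand {p n : ℕ} (H : Matrix (Fin p) (Fin p) ℝ) (hHsymm : H.IsSymm)
    (F : Matrix (Fin n) (Fin p) ℝ) (x : Fin n → ℝ) (U V : Fin p → ℝ) :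
    (1/2) * (U ⬝ᵥ H.mulVec U) + x ⬝ᵥ F.mulVec U
      = ((1/2) * (V ⬝ᵥ H.mulVec V) + x ⬝ᵥ F.mulVec V)
        + (H.mulVec V + Fᵀ.mulVec x) ⬝ᵥ (U - V)
        + (1/2) * ((U - V) ⬝ᵥ H.mulVec (U - V)) := by
  obtain ⟨d, rfl⟩ : ∃ d, U = V + d := ⟨U - V, by abel⟩
  have hsym : V ⬝ᵥ H.mulVec d = d ⬝ᵥ H.mulVec V := by
    rw [dotProduct_mulVec, ← vecMul_transpose, hHsymm.eq, dotProduct_comm]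
  have hFx : x ⬝ᵥ F.mulVec d = Fᵀ.mulVec x ⬝ᵥ d := by
    rw [dotProduct_mulVec, mulVec_transpose]
  simp only [add_sub_cancel_left, Matrix.mulVec_add, dotProduct_add, add_dotProduct,
    dotProduct_add]
  rw [hsym, hFx, dotProduct_comm (H.mulVec V) d]
  ring

lemma inj_of_rank {p : ℕ} {β : Type*} [Fintype β] [DecidableEq β]
    (B : Matrix β (Fin p) ℝ) (hr : B.rank = Fintype.card β) :
    ∀ y : β → ℝ, Bᵀ.mulVec y = 0 → y = 0 := by
  have hrt : Bᵀ.rank = Fintype.card β := by rw [Matrix.rank_transpose]; exact hr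
  have h := LinearMap.finrank_range_add_finrank_ker (Bᵀ.mulVecLin)
  rw [Module.finrank_pi] at h
  have hker : LinearMap.ker Bᵀ.mulVecLin = ⊥ := by
    have : Module.finrank ℝ (LinearMap.ker Bᵀ.mulVecLin) = 0 := by
      have := hrt
      unfold Matrix.rank at this
      omega
    exact Submodule.finrank_eq_zero.mp this
  exact Matrix.ker_mulVecLin_eq_bot_iff.mp hker

lemma submatrix_row_mul {q p r : ℕ} {β : Type*} [Fintype β]
    (B : Matrix (Fin q) (Fin p) ℝ) (C : Matrix (Fin p) (Fin r) ℝ) (f : β → Fin q) :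
    (B.submatrix f id) * C = (B * C).submatrix f id := by
  ext i j; simp [Matrix.mul_apply]

set_option maxHeartbeats 1000000 in
open Matrix in
theorem stmt_19 (p n q : ℕ)
    (H : Matrix (Fin p) (Fin p) ℝ) (hH : H.PosDef) (hHsymm : H.IsSymm)
    (F : Matrix (Fin n) (Fin p) ℝ) (G : Matrix (Fin q) (Fin p) ℝ)
    (E : Matrix (Fin q) (Fin n) ℝ) (w : Fin q → ℝ)
    (x : Fin n → ℝ) (Ustar : Fin p → ℝ)
    (hfeas : ∀ i, (G.mulVec Ustar) i - (E.mulVec x) i ≤ w i)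
    (hmin : ∀ U : Fin p → ℝ, (∀ i, (G.mulVec U) i - (E.mulVec x) i ≤ w i) →
      (1 / 2) * (Ustar ⬝ᵥ H.mulVec Ustar) + x ⬝ᵥ F.mulVec Ustar ≤
        (1 / 2) * (U ⬝ᵥ H.mulVec U) + x ⬝ᵥ F.mulVec U)
    (huniq : ∀ U : Fin p → ℝ, (∀ i, (G.mulVec U) i - (E.mulVec x) i ≤ w i) →
      (1 / 2) * (U ⬝ᵥ H.mulVec U) + x ⬝ᵥ F.mulVec U =
        (1 / 2) * (Ustar ⬝ᵥ H.mulVec Ustar) + x ⬝ᵥ F.mulVec Ustar → U = Ustar)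
    (A : Finset (Fin q))
    (hA : ∀ i : Fin q, i ∈ A ↔ (G.mulVec Ustar) i - (E.mulVec x) i = w i)
    (hrank : (G.submatrix (fun i : A => (i : Fin q)) id).rank = A.card) :
    Ustar =
      -((H⁻¹ * Fᵀ).mulVec x) +
        (H⁻¹ * (G.submatrix (fun i : A => (i : Fin q)) id)ᵀ *
          ((G.submatrix (fun i : A => (i : Fin q)) id) * H⁻¹ *
            (G.submatrix (fun i : A => (i : Fin q)) id)ᵀ)⁻¹).mulVec
          (fun i : A => w (i : Fin q) +
            ((E + G * H⁻¹ * Fᵀ).submatrix (fun j : A => (j : Fin q)) id).mulVec x i) := by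
  set Gm := G.submatrix (fun i : A => (i : Fin q)) id with hGmdef
  set M := Gm * H⁻¹ * Gmᵀ with hMdef
  set c : A → ℝ := (fun i : A => w (i : Fin q) +
      ((E + G * H⁻¹ * Fᵀ).submatrix (fun j : A => (j : Fin q)) id).mulVec x i) with hcdef
  set U0 : Fin p → ℝ := -((H⁻¹ * Fᵀ).mulVec x) + (H⁻¹ * Gmᵀ * M⁻¹).mulVec c with hU0def
  -- invertibility of H
  have hHdet : IsUnit H.det := (Matrix.isUnit_iff_isUnit_det H).mp hH.isUnit
  have hHmul : H * H⁻¹ = 1 := Matrix.mul_nonsing_inv _ hHdet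
  have hHinv : (H⁻¹).PosDef := hH.inv
  -- injectivity of Gmᵀ
  have hinj : ∀ y : A → ℝ, Gmᵀ.mulVec y = 0 → y = 0 := by
    apply inj_of_rank
    rw [Fintype.card_coe]; exact hrank
  -- M is positive definite
  have hM : M.PosDef := by
    refine Matrix.PosDef.of_dotProduct_mulVec_pos ?_ ?_
    · have hHi : (H⁻¹)ᵀ = H⁻¹ := by
        rw [Matrix.transpose_nonsing_inv, hHsymm.eq]
      show Mᴴ = M
      rw [Matrix.conjTranspose_eq_transpose_of_trivial, hMdef,
        Matrix.transpose_mul, Matrix.transpose_mul, Matrix.transpose_transpose, hHi,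
        Matrix.mul_assoc]
    · intro y hy
      have hz : Gmᵀ.mulVec y ≠ 0 := fun h => hy (hinj y h)
      have h1 := hHinv.dotProduct_mulVec_pos hz
      simp only [star_trivial] at h1 ⊢
      have h2 : y ⬝ᵥ M.mulVec y = (Gmᵀ.mulVec y) ⬝ᵥ H⁻¹.mulVec (Gmᵀ.mulVec y) := by
        rw [hMdef, ← Matrix.mulVec_mulVec, ← Matrix.mulVec_mulVec, dotProduct_mulVec,
          ← mulVec_transpose]
      rw [h2]; exact h1
  have hMdetU : IsUnit M.det := (Matrix.isUnit_iff_isUnit_det M).mp hM.isUnit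
  have hMmul : M * M⁻¹ = 1 := Matrix.mul_nonsing_inv _ hMdetU
  -- the target vector b
  set b : A → ℝ := fun i : A => w (i : Fin q) + E.mulVec x (i : Fin q) with hbdef
  have hc : c = fun i => b i + (Gm * H⁻¹ * Fᵀ).mulVec x i := by
    funext i
    have hsub : (Gm * H⁻¹ * Fᵀ) = ((G * H⁻¹ * Fᵀ).submatrix (fun i : A => (i : Fin q)) id) := by
      rw [hGmdef, submatrix_row_mul, submatrix_row_mul]
    rw [hcdef, hbdef, hsub]
    show w _ + ((E + G * H⁻¹ * Fᵀ).submatrix _ id).mulVec x i = _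
    simp only [Matrix.mulVec, dotProduct, Matrix.submatrix_apply, Matrix.add_apply,
      add_mul, id_eq]
    rw [Finset.sum_add_distrib]
    ring
  -- Gm * U0 = b
  have hGmU0 : Gm.mulVec U0 = b := by
    rw [hU0def, Matrix.mulVec_add, Matrix.mulVec_neg, Matrix.mulVec_mulVec, Matrix.mulVec_mulVec]
    simp only [← Matrix.mul_assoc]
    rw [← hMdef, hMmul, Matrix.one_mulVec, hc]
    funext i
    simp only [Pi.add_apply, Pi.neg_apply]
    ring
  -- gradient at U0
  have hgrad : H.mulVec U0 = -(Fᵀ.mulVec x) + Gmᵀ.mulVec (M⁻¹.mulVec c) := by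
    rw [hU0def, Matrix.mulVec_add, Matrix.mulVec_neg, Matrix.mulVec_mulVec, Matrix.mulVec_mulVec]
    simp only [← Matrix.mul_assoc]
    rw [hHmul, Matrix.one_mul, Matrix.mulVec_mulVec]
    congr 1
    rw [Matrix.one_mul]
  -- Gm * Ustar = b
  have hGmUstar : Gm.mulVec Ustar = b := by
    funext i
    have hi := (hA i).mp i.2
    show G.mulVec Ustar (i : Fin q) = w (i : Fin q) + E.mulVec x (i : Fin q)
    linarith
  set d : Fin p → ℝ := Ustar - U0 with hddef
  have hGmd : Gm.mulVec d = 0 := by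
    rw [hddef, Matrix.mulVec_sub, hGmUstar, hGmU0, sub_self]
  -- orthogonality
  have horth : (H.mulVec U0 + Fᵀ.mulVec x) ⬝ᵥ d = 0 := by
    rw [hgrad, show -(Fᵀ.mulVec x) + Gmᵀ.mulVec (M⁻¹.mulVec c) + Fᵀ.mulVec x
        = Gmᵀ.mulVec (M⁻¹.mulVec c) from by abel]
    rw [mulVec_transpose, ← dotProduct_mulVec, hGmd, dotProduct_zero]
  set k : ℝ := d ⬝ᵥ H.mulVec d with hkdef
  -- f Ustar = f U0 + k/2
  have e1 := quad_expand H hHsymm F x Ustar U0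
  rw [← hddef, horth, ← hkdef, add_zero] at e1
  -- expansion at Ustar
  have e2 := quad_expand H hHsymm F x U0 Ustar
  have hU0sub : U0 - Ustar = -d := by rw [hddef]; abel
  have hknn : (U0 - Ustar) ⬝ᵥ H.mulVec (U0 - Ustar) = k := by
    rw [hU0sub, Matrix.mulVec_neg, dotProduct_neg, neg_dotProduct, neg_neg, hkdef]
  rw [hknn, hU0sub] at e2
  set a : ℝ := (H.mulVec Ustar + Fᵀ.mulVec x) ⬝ᵥ (-d) with hadef
  have hak : a = -k := by linarith
  -- choose step size t
  set s : Fin q → ℝ := fun i => w i - (G.mulVec Ustar i - E.mulVec x i) with hsdef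
  have hspos : ∀ i ∉ A, 0 < s i := by
    intro i hi
    have h1 := hfeas i
    have h2 : (G.mulVec Ustar) i - (E.mulVec x) i ≠ w i := fun h => hi ((hA i).mpr h)
    rw [hsdef]
    simp only []
    cases lt_or_eq_of_le h1 with
    | inl h => linarith
    | inr h => exact absurd h h2
  set cc : Fin q → ℝ := fun i => G.mulVec U0 i - G.mulVec Ustar i with hccdef
  set T : Finset ℝ := insert 1 (Finset.univ.image
      (fun i : Fin q => if i ∈ A then 1 else s i / max (cc i) 1)) with hTdef
  have hTne : T.Nonempty := ⟨1, Finset.mem_insert_self _ _⟩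
  set t : ℝ := T.min' hTne with htdef
  have ht1 : t ≤ 1 := Finset.min'_le _ _ (Finset.mem_insert_self _ _)
  have ht0 : 0 < t := by
    have hmem := Finset.min'_mem T hTne
    rw [← htdef] at hmem
    rw [hTdef] at hmem
    rcases Finset.mem_insert.mp hmem with h | h
    · rw [h]; norm_num
    · obtain ⟨i, _, hi⟩ := Finset.mem_image.mp h
      rw [← hi]
      by_cases hiA : i ∈ A
      · simp [hiA]
      · simp only [hiA, if_false]
        exact div_pos (hspos i hiA) (lt_of_lt_of_le one_pos (le_max_right _ _))
  have htcc : ∀ i ∉ A, t * cc i ≤ s i := by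
    intro i hi
    have hmax : (0:ℝ) < max (cc i) 1 := lt_of_lt_of_le one_pos (le_max_right _ _)
    have hle : t ≤ s i / max (cc i) 1 := by
      apply Finset.min'_le
      rw [hTdef]
      refine Finset.mem_insert_of_mem (Finset.mem_image.mpr ⟨i, Finset.mem_univ _, ?_⟩)
      simp [hi]
    calc t * cc i ≤ t * max (cc i) 1 :=
          mul_le_mul_of_nonneg_left (le_max_left _ _) ht0.le
      _ ≤ (s i / max (cc i) 1) * max (cc i) 1 :=
          mul_le_mul_of_nonneg_right hle hmax.le
      _ = s i := div_mul_cancel₀ _ hmax.ne'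
  -- the perturbed point is feasible
  set Ut : Fin p → ℝ := Ustar + t • (U0 - Ustar) with hUtdef
  have hUtfeas : ∀ i, (G.mulVec Ut) i - (E.mulVec x) i ≤ w i := by
    intro i
    have hexp : (G.mulVec Ut) i = G.mulVec Ustar i + t * cc i := by
      rw [hUtdef, Matrix.mulVec_add, Matrix.mulVec_smul, Matrix.mulVec_sub]
      simp only [Pi.add_apply, Pi.smul_apply, Pi.sub_apply, smul_eq_mul, hccdef]
      try ring
    by_cases hiA : i ∈ A
    · have h1 := (hA i).mp hiA
      have h2 : G.mulVec U0 i = w i + E.mulVec x i := by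
        have := congrFun hGmU0 ⟨i, hiA⟩
        rw [hbdef] at this
        exact this
      have h3 : cc i = 0 := by rw [hccdef]; simp only []; rw [h2]; linarith
      rw [hexp, h3]
      linarith
    · have h4 := htcc i hiA
      rw [hexp]
      have : s i = w i - (G.mulVec Ustar i - E.mulVec x i) := by rw [hsdef]
      linarith
  -- apply minimality
  have hle := hmin Ut hUtfeas
  have e3 := quad_expand H hHsymm F x Ut Ustar
  have hUtsub : Ut - Ustar = t • (-d) := by
    rw [hUtdef, hU0sub]; abel
  rw [hUtsub] at e3
  have hdot1 : (H.mulVec Ustar + Fᵀ.mulVec x) ⬝ᵥ (t • (-d)) = t * a := by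
    rw [hadef, dotProduct_smul, smul_eq_mul]
  have hdot2 : (t • (-d)) ⬝ᵥ H.mulVec (t • (-d)) = t * t * k := by
    rw [Matrix.mulVec_smul, dotProduct_smul, smul_dotProduct, Matrix.mulVec_neg,
      dotProduct_neg, neg_dotProduct, neg_neg, smul_eq_mul, smul_eq_mul, hkdef]
    ring
  rw [hdot1, hdot2] at e3
  -- conclude k ≤ 0
  have hk0 : k ≤ 0 := by
    by_contra hk
    push_neg at hk
    have key : 0 ≤ t * a + 1/2 * (t * t * k) := by linarith [hle, e3]
    rw [hak] at key
    nlinarith [mul_pos ht0 hk, mul_nonneg (mul_nonneg ht0.le hk.le) (sub_nonneg.mpr ht1)]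
  have hd0 : d = 0 := by
    by_contra hd
    have := hH.dotProduct_mulVec_pos hd
    rw [star_trivial] at this
    rw [hkdef] at hk0
    linarith
  have : Ustar = U0 := by
    have := sub_eq_zero.mp (hddef ▸ hd0)
    exact this
  rw [this, hU0def]
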